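/- For any finite alphabet Σ with |Σ| ≥ 2, the class 𝓛¹_Σ of nonerasing terminal-free pattern languages over Σ is not closed under morphisms that map every letter to a word of length two. In particular, for Σ ⊇ {a, b}, the image of the universal pattern language L¹_Σ(x) = Σ⁺ under the morphism h with h(s) = ab for every s ∈ Σ is the language {ab}⁺ = {(ab)^k | k ≥ 1}, and {ab}⁺ ≠ L¹_Σ(γ) for every pattern γ. -/

import Mathlib

/-- The nonerasing terminal-free (one-dimensional) pattern language of the
pattern `α` (a nonempty string over the variables `ℕ`) over the alphabet `σ`:
all words obtained by substituting a nonempty word for each variable. -/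
def patLang (σ : Type) (α : List ℕ) : Set (List σ) :=
  {w | ∃ s : ℕ → List σ, (∀ x, s x ≠ []) ∧ w = α.flatMap s}

lemma flatMap_const {α β : Type*} (l : List α) (c : List β) :
    l.flatMap (fun _ => c) = (List.replicate l.length c).flatten := by
  induction l with
  | nil => simp
  | cons x xs ih => simp [List.flatMap_cons, ih, List.replicate_succ]

/-- the class of nonerasing terminal-free pattern languages over
a non-unary alphabet is not closed under morphisms mapping every letter to a
word of length two: the image of `Σ⁺ = L¹_Σ(x)` under the morphism sending
every letter to `ab` is `{ab}⁺`, which is not a pattern language. -/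
theorem stmt11 {σ : Type} [Fintype σ] (a b : σ) (hab : a ≠ b) :
    ((fun w : List σ => w.flatMap fun _ => [a, b]) '' patLang σ [0] =
      {w : List σ | ∃ k : ℕ, 1 ≤ k ∧ w = (List.replicate k [a, b]).flatten}) ∧
    (∀ γ : List ℕ, γ ≠ [] →
      {w : List σ | ∃ k : ℕ, 1 ≤ k ∧ w = (List.replicate k [a, b]).flatten} ≠
        patLang σ γ) := by
  constructor
  · ext w
    constructor
    · rintro ⟨v, ⟨s, hs, rfl⟩, rfl⟩
      refine ⟨([0].flatMap s).length, ?_, flatMap_const _ _⟩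
      have : s 0 ≠ [] := hs 0
      simpa using Nat.succ_le_of_lt (List.length_pos_iff.mpr this)
    · rintro ⟨k, hk, rfl⟩
      refine ⟨List.replicate k a, ⟨fun _ => List.replicate k a, fun _ => ?_, by simp⟩, ?_⟩
      · simp only [ne_eq, List.replicate_eq_nil_iff]; omega
      · simpa using flatMap_const (List.replicate k a) [a, b]
  · intro γ hγ heq
    have hmem : γ.flatMap (fun _ => ([a] : List σ)) ∈ patLang σ γ :=
      ⟨fun _ => [a], fun _ => by simp, rfl⟩
    rw [← heq] at hmem
    obtain ⟨k, hk, hw⟩ := hmem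
    have hb : b ∈ (List.replicate k ([a, b] : List σ)).flatten :=
      List.mem_flatten.mpr ⟨[a, b], List.mem_replicate.mpr ⟨by omega, rfl⟩, by simp⟩
    rw [← hw, flatMap_const] at hb
    rcases List.mem_flatten.mp hb with ⟨l, hl, hbl⟩
    have : l = [a] := List.eq_of_mem_replicate hl
    subst this
    simp at hbl
    exact hab hbl.symm
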